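/- Let Γ be a group acting on a measure space (M, θ) such that the diagonal Γ-action on (M × M, θ × θ) is ergodic. Then every finite index subgroup Γ₀ ≤ Γ acts ergodically on (M, θ). -/

import Mathlib

open MeasureTheory

/-- If a group `Γ` acts on a probability space `(M, θ)` by measurable,
measure-class-preserving maps, and the diagonal action on `(M × M, θ × θ)` is
ergodic, then every finite index subgroup `Γ₀ ≤ Γ` acts ergodically on
`(M, θ)`. -/
theorem finite_index_ergodic_of_doubly_ergodic {Γ M : Type*} [Group Γ]
    [MulAction Γ M] [MeasurableSpace M]
    (θ : Measure M) [IsProbabilityMeasure θ]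
    (hmeas : ∀ γ : Γ, Measurable (fun x : M => γ • x))
    (hqi : ∀ (γ : Γ) (A : Set M), MeasurableSet A →
      (θ A = 0 ↔ θ ((fun x : M => γ • x) ⁻¹' A) = 0))
    (herg2 : ∀ A : Set (M × M), MeasurableSet A →
      (∀ γ : Γ, (fun p : M × M => (γ • p.1, γ • p.2)) ⁻¹' A = A) →
      (θ.prod θ) A = 0 ∨ (θ.prod θ) Aᶜ = 0)
    (Γ₀ : Subgroup Γ) [Γ₀.FiniteIndex] :
    ∀ A : Set M, MeasurableSet A →
      (∀ γ ∈ Γ₀, (fun x : M => γ • x) ⁻¹' A = A) →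
      θ A = 0 ∨ θ Aᶜ = 0 := by
  intro A hAmeas hinv
  by_contra hcon
  push_neg at hcon
  obtain ⟨hA0, hAc0⟩ := hcon
  -- pass to the normal core
  set N := Γ₀.normalCore with hNdef
  have hNnormal : N.Normal := Subgroup.normalCore_normal Γ₀
  have hNfin : N.FiniteIndex := Subgroup.finiteIndex_normalCore Γ₀
  have hinvN : ∀ γ ∈ N, (fun x : M => γ • x) ⁻¹' A = A :=
    fun γ hγ => hinv γ (Γ₀.normalCore_le hγ)
  -- preimage composition lemma
  have hcomp : ∀ (a b : Γ) (S : Set M),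
      (fun x : M => b • x) ⁻¹' ((fun x : M => a • x) ⁻¹' S)
        = (fun x : M => (a * b) • x) ⁻¹' S := by
    intro a b S
    ext x
    simp [Set.mem_preimage, mul_smul]
  -- B is constant on left translates by N on the right
  have key : ∀ (γ n : Γ), n ∈ N →
      (fun x : M => (γ * n) • x) ⁻¹' A = (fun x : M => γ • x) ⁻¹' A := by
    intro γ n hn
    have hm : γ * n * γ⁻¹ ∈ N := hNnormal.conj_mem n hn γ
    have h1 : γ * n = (γ * n * γ⁻¹) * γ := by group
    rw [h1, ← hcomp, hinvN _ hm]
  -- the map on the quotient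
  let C : Γ ⧸ N → Set M := Quotient.lift (fun γ : Γ => (fun x : M => γ • x) ⁻¹' A)
    (by
      intro a b hab
      have h : a⁻¹ * b ∈ N := (QuotientGroup.leftRel_apply).mp hab
      have : b = a * (a⁻¹ * b) := by group
      rw [this]
      exact (key a _ h).symm)
  have hCmk : ∀ γ : Γ, C (QuotientGroup.mk γ) = (fun x : M => γ • x) ⁻¹' A :=
    fun γ => rfl
  have hCmeas : ∀ q : Γ ⧸ N, MeasurableSet (C q) := by
    intro q
    induction q using Quotient.inductionOn with
    | h γ => exact (hmeas γ) hAmeas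
  have hCtrans : ∀ (δ : Γ) (q : Γ ⧸ N),
      (fun x : M => δ • x) ⁻¹' (C q) = C (q * QuotientGroup.mk δ) := by
    intro δ q
    induction q using Quotient.inductionOn with
    | h γ =>
      have : (QuotientGroup.mk γ : Γ ⧸ N) * QuotientGroup.mk δ = QuotientGroup.mk (γ * δ) :=
        (QuotientGroup.mk_mul (N := N) γ δ).symm
      rw [this]
      show (fun x : M => δ • x) ⁻¹' ((fun x : M => γ • x) ⁻¹' A)
        = (fun x : M => (γ * δ) • x) ⁻¹' A
      exact hcomp γ δ A
  -- the invariant set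
  let T : Set (M × M) := ⋃ q : Γ ⧸ N, (C q) ×ˢ (C q)ᶜ
  have hTmeas : MeasurableSet T :=
    MeasurableSet.iUnion fun q => (hCmeas q).prod (hCmeas q).compl
  have hTinv : ∀ δ : Γ, (fun p : M × M => (δ • p.1, δ • p.2)) ⁻¹' T = T := by
    intro δ
    ext ⟨x, y⟩
    simp only [T, Set.mem_preimage, Set.mem_iUnion, Set.mem_prod, Set.mem_compl_iff]
    constructor
    · rintro ⟨q, hx, hy⟩
      refine ⟨q * QuotientGroup.mk δ, ?_, ?_⟩
      · have := hCtrans δ q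
        rw [← this]; exact hx
      · have := hCtrans δ q
        rw [← this]; exact hy
    · rintro ⟨q, hx, hy⟩
      refine ⟨q * (QuotientGroup.mk δ)⁻¹, ?_, ?_⟩
      · rw [show ((δ:Γ) • x ∈ C (q * (QuotientGroup.mk δ)⁻¹)) =
            (x ∈ (fun x : M => δ • x) ⁻¹' (C (q * (QuotientGroup.mk δ)⁻¹))) from rfl,
          hCtrans δ, inv_mul_cancel_right]
        exact hx
      · rw [show ((δ:Γ) • y ∈ C (q * (QuotientGroup.mk δ)⁻¹)) =
            (y ∈ (fun x : M => δ • x) ⁻¹' (C (q * (QuotientGroup.mk δ)⁻¹))) from rfl,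
          hCtrans δ, inv_mul_cancel_right]
        exact hy
  -- T contains A ×ˢ Aᶜ
  have hC1 : C (1 : Γ ⧸ N) = A := by
    have : (1 : Γ ⧸ N) = QuotientGroup.mk (1 : Γ) := rfl
    rw [this, hCmk]
    ext x; simp
  have hsub : A ×ˢ Aᶜ ⊆ T := by
    intro p hp
    exact Set.mem_iUnion.mpr ⟨1, by rw [hC1]; exact hp⟩
  have hTpos : (θ.prod θ) T ≠ 0 := by
    intro h0
    have hle : (θ.prod θ) (A ×ˢ Aᶜ) ≤ 0 := h0 ▸ measure_mono hsub
    rw [Measure.prod_prod] at hle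
    exact (mul_ne_zero hA0 hAc0) (le_antisymm hle zero_le)
  -- atoms: some color class has positive measure
  let P : Set (Γ ⧸ N) → Set M := fun c => {x | ∀ q, x ∈ C q ↔ q ∈ c}
  have hcover : (Set.univ : Set M) ⊆ ⋃ c, P c := by
    intro x _
    exact Set.mem_iUnion.mpr ⟨{q | x ∈ C q}, fun q => Iff.rfl⟩
  have hatom : ∃ c, θ (P c) ≠ 0 := by
    by_contra hall
    push_neg at hall
    have : θ (⋃ c, P c) = 0 := measure_iUnion_null hall
    have h1 : θ (Set.univ : Set M) = 0 :=
      le_antisymm (this ▸ measure_mono hcover) zero_le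
    simp [measure_univ] at h1
  obtain ⟨c, hc⟩ := hatom
  -- P c ×ˢ P c is disjoint from T
  have hPsub : P c ×ˢ P c ⊆ Tᶜ := by
    rintro ⟨x, y⟩ ⟨hx, hy⟩ hT
    obtain ⟨q, hq⟩ := Set.mem_iUnion.mp hT
    rw [Set.mem_prod] at hq
    exact hq.2 ((hy q).mpr ((hx q).mp hq.1))
  -- conclude
  rcases herg2 T hTmeas hTinv with h | h
  · exact hTpos h
  · have hle : (θ.prod θ) (P c ×ˢ P c) ≤ 0 := h ▸ measure_mono hPsub
    rw [Measure.prod_prod] at hle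
    exact (mul_ne_zero hc hc) (le_antisymm hle zero_le)
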